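/- arXiv:1312.2163 — 2 statements merged into one kernel-verified Lean document; each statement's English description precedes it below -/
import Mathlib

section
/- A code satisfying the almost-disjointness condition corrects t translocations: let C be an r-regular multipermutation code of length n and t a positive integer with 2t < r; if for all codewords π, σ and all ranks i ∈ [n/r], either o^r_π(i) = o^r_σ(i) or |o^r_π(i) ∩ o^r_σ(i)| < r − 2t, then the minimum r-regular Ulam distance of C is at least 2t+1. -/
/-- The `r`-regular multipermutation associated with a permutation `π` of `Fin n`:
`mp n r π j` is the (0-indexed) rank block of element `j`, i.e. `⌊π⁻¹(j)/r⌋`. -/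
def mp (n r : ℕ) (π : Equiv.Perm (Fin n)) (j : Fin n) : ℕ := (π.symm j : ℕ) / r

/-- The `i`-th part of the ordered set partition associated with `π`:
the set of elements of rank block `i`. -/
def part (n r : ℕ) (π : Equiv.Perm (Fin n)) (i : ℕ) : Finset (Fin n) :=
  Finset.univ.filter fun j => mp n r π j = i

/-- The `r`-regular Hamming distance between permutations. -/
def hammR (n r : ℕ) (π σ : Equiv.Perm (Fin n)) : ℕ :=
  (Finset.univ.filter fun j => mp n r π j ≠ mp n r σ j).card

/-- Length of a longest common subsequence of two lists. -/
noncomputable def lcsLen {α : Type*} (A B : List α) : ℕ :=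
  sSup {k | ∃ l : List α, l.length = k ∧ l.Sublist A ∧ l.Sublist B}

/-- Ulam distance between two lists of the same length (length minus LCS length). -/
noncomputable def ulamList {α : Type*} (A B : List α) : ℕ := A.length - lcsLen A B

/-- The Ulam distance between two permutations of `Fin n`. -/
noncomputable def ulam (n : ℕ) (π σ : Equiv.Perm (Fin n)) : ℕ :=
  n - lcsLen (List.ofFn π) (List.ofFn σ)

/-- The `r`-regular Ulam distance: minimum Ulam distance between members of the
`≡_r`-equivalence classes of `π` and `σ`. -/
noncomputable def ulamR (n r : ℕ) (π σ : Equiv.Perm (Fin n)) : ℕ :=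
  sInf {k | ∃ π' σ' : Equiv.Perm (Fin n),
    mp n r π' = mp n r π ∧ mp n r σ' = mp n r σ ∧ k = ulam n π' σ'}


private lemma sm_add (F : ℕ → ℕ) (hF : StrictMono F) (a j : ℕ) : F a + j ≤ F (a + j) := by
  induction j with
  | zero => simp
  | succ j ih =>
      have h := hF (show a + j < a + (j + 1) by omega)
      omega

private lemma sm_ge (F : ℕ → ℕ) (hF : StrictMono F) (j : ℕ) : j ≤ F j := by
  induction j with
  | zero => omega
  | succ j ih =>
      have h := hF (show j < j + 1 by omega)
      omega

/-- Bounds on a strictly monotone map `Fin m → Fin n`. -/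
private lemma emb_bounds {m n : ℕ} (f : Fin m → Fin n) (hf : StrictMono f) (k : Fin m) :
    (k : ℕ) ≤ (f k : ℕ) ∧ (f k : ℕ) + (m - 1 - (k : ℕ)) ≤ n - 1 := by
  set F : ℕ → ℕ := fun j => if h : j < m then (f ⟨j, h⟩ : ℕ) else j + n with hFdef
  have hF : StrictMono F := by
    intro a b hab
    by_cases ha : a < m
    · by_cases hb : b < m
      · simpa [hFdef, ha, hb] using hf (show (⟨a, ha⟩ : Fin m) < ⟨b, hb⟩ from hab)
      · have : (f ⟨a, ha⟩ : ℕ) < n := (f ⟨a, ha⟩).isLt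
        simp [hFdef, ha, hb]; omega
    · have hb : ¬ b < m := fun hb => ha (hab.trans hb)
      simp [hFdef, ha, hb]; omega
  have h1 : (k : ℕ) ≤ F (k : ℕ) := sm_ge F hF _
  have h2 : F (k : ℕ) + (m - 1 - (k : ℕ)) ≤ F (m - 1) := by
    have h := sm_add F hF (k : ℕ) (m - 1 - (k : ℕ))
    have hk := k.isLt
    have he : (k : ℕ) + (m - 1 - (k : ℕ)) = m - 1 := by omega
    rw [he] at h
    omega
  have hk := k.isLt
  have hm1 : m - 1 < m := by omega
  have h3 : F (m - 1) = (f ⟨m - 1, hm1⟩ : ℕ) := by simp [hFdef, hm1]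
  have h4 : (f ⟨m - 1, hm1⟩ : ℕ) < n := (f _).isLt
  have h5 : F (k : ℕ) = (f k : ℕ) := by simp [hFdef, hk]
  constructor <;> omega

/-- mp-equal permutations have equal parts. -/
private lemma part_congr {n r : ℕ} {π π' : Equiv.Perm (Fin n)}
    (h : mp n r π' = mp n r π) (i : ℕ) : part n r π' i = part n r π i := by
  simp [part, h]

/-- A multipermutation code whose same-rank parts are pairwise equal or
almost disjoint (intersection smaller than `r − 2t`) has minimum `r`-regular Ulam
distance at least `2t+1`, i.e., it corrects `t` translocation errors. -/
theorem almost_disjoint_code_corrects (n r t : ℕ) (hn : 0 < n) (hr : 0 < r)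
    (ht : 0 < t) (htr : 2 * t < r) (hdvd : r ∣ n)
    (C : Set (Equiv.Perm (Fin n)))
    (hAD : ∀ π ∈ C, ∀ σ ∈ C, ∀ i < n / r,
      part n r π i = part n r σ i ∨ ((part n r π i) ∩ (part n r σ i)).card < r - 2 * t) :
    ∀ π ∈ C, ∀ σ ∈ C, mp n r π ≠ mp n r σ → 2 * t + 1 ≤ ulamR n r π σ := by
  intro π hπ σ hσ hne
  by_contra hcon
  push_neg at hcon
  -- the infimum is attained
  have hne' : {k | ∃ π' σ' : Equiv.Perm (Fin n),
      mp n r π' = mp n r π ∧ mp n r σ' = mp n r σ ∧ k = ulam n π' σ'}.Nonempty :=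
    ⟨ulam n π σ, π, σ, rfl, rfl, rfl⟩
  obtain ⟨π', σ', hπ', hσ', hk⟩ := Nat.sInf_mem hne'
  rw [ulamR] at hcon
  have hle : ulam n π' σ' ≤ 2 * t := by omega
  clear hk hcon
  -- extract a longest common subsequence
  have hSne : {k | ∃ l : List (Fin n), l.length = k ∧
      l.Sublist (List.ofFn π') ∧ l.Sublist (List.ofFn σ')}.Nonempty :=
    ⟨0, [], rfl, List.nil_sublist _, List.nil_sublist _⟩
  have hSbdd : BddAbove {k | ∃ l : List (Fin n), l.length = k ∧
      l.Sublist (List.ofFn π') ∧ l.Sublist (List.ofFn σ')} := by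
    refine ⟨n, ?_⟩
    rintro x ⟨l, rfl, hl, -⟩
    simpa using hl.length_le
  obtain ⟨l, hlen, hsubπ, hsubσ⟩ := Nat.sSup_mem hSne hSbdd
  have hbig : n ≤ l.length + 2 * t := by
    have h1 : n - sSup {k | ∃ l : List (Fin n), l.length = k ∧
        l.Sublist (List.ofFn ⇑π') ∧ l.Sublist (List.ofFn ⇑σ')} ≤ 2 * t := hle
    have h2 : sSup {k | ∃ l : List (Fin n), l.length = k ∧
        l.Sublist (List.ofFn ⇑π') ∧ l.Sublist (List.ofFn ⇑σ')} ≤ n := by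
      apply csSup_le hSne
      rintro x ⟨l', rfl, hl', -⟩
      simpa using hl'.length_le
    omega
  -- the order embeddings of the common subsequence
  obtain ⟨fπ, hfπ⟩ := List.sublist_iff_exists_fin_orderEmbedding_get_eq.mp hsubπ
  obtain ⟨fσ, hfσ⟩ := List.sublist_iff_exists_fin_orderEmbedding_get_eq.mp hsubσ
  have keyπ : ∀ k : Fin l.length, (π'.symm (l.get k) : ℕ) = (fπ k : ℕ) := by
    intro k
    rw [hfπ k, List.get_ofFn, Equiv.symm_apply_apply]
    simp
  have keyσ : ∀ k : Fin l.length, (σ'.symm (l.get k) : ℕ) = (fσ k : ℕ) := by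
    intro k
    rw [hfσ k, List.get_ofFn, Equiv.symm_apply_apply]
    simp
  have hnd : l.Nodup := hsubπ.nodup ((List.nodup_ofFn).mpr π'.injective)
  -- the intersection of same-rank parts is large
  have hpart : ∀ i < n / r, r - 2 * t ≤ ((part n r π i) ∩ (part n r σ i)).card := by
    intro i hi
    have hin : i * r + r ≤ n := by
      have h : (i + 1) * r ≤ (n / r) * r := Nat.mul_le_mul_right r hi
      rw [Nat.div_mul_cancel hdvd] at h
      have he : (i + 1) * r = i * r + r := by ring
      omega
    have hcard := Finset.card_le_card_of_injOn
      (f := fun k : ℕ => l.getD k (π' ⟨0, hn⟩))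
      (s := Finset.Ico (i * r) (i * r + (r - 2 * t)))
      (t := (part n r π i) ∩ (part n r σ i)) ?_ ?_
    · rw [Nat.card_Ico] at hcard
      omega
    · -- maps into
      intro k hk
      rw [Finset.mem_coe, Finset.mem_Ico] at hk
      have hkm : k < l.length := by omega
      have hget : l.getD k (π' ⟨0, hn⟩) = l.get ⟨k, hkm⟩ := List.getD_eq_get l _ ⟨k, hkm⟩
      obtain ⟨hb1π, hb2π⟩ := emb_bounds (⇑fπ) fπ.strictMono ⟨k, hkm⟩
      obtain ⟨hb1σ, hb2σ⟩ := emb_bounds (⇑fσ) fσ.strictMono ⟨k, hkm⟩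
      simp only [Fin.val_mk] at hb1π hb2π hb1σ hb2σ
      have hlπ : (List.ofFn ⇑π').length = n := by simp
      have hlσ : (List.ofFn ⇑σ').length = n := by simp
      have hrangeπ : i * r ≤ (fπ ⟨k, hkm⟩ : ℕ) ∧ (fπ ⟨k, hkm⟩ : ℕ) < i * r + r := by
        constructor <;> omega
      have hrangeσ : i * r ≤ (fσ ⟨k, hkm⟩ : ℕ) ∧ (fσ ⟨k, hkm⟩ : ℕ) < i * r + r := by
        constructor <;> omega
      show l.getD k (π' ⟨0, hn⟩) ∈ part n r π i ∩ part n r σ i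
      rw [Finset.mem_inter, ← part_congr hπ' i, ← part_congr hσ' i]
      constructor
      · simp only [part, Finset.mem_filter, Finset.mem_univ, true_and, hget]
        rw [mp, keyπ ⟨k, hkm⟩]
        exact Nat.div_eq_of_lt_le hrangeπ.1 (by rw [Nat.succ_mul]; omega)
      · simp only [part, Finset.mem_filter, Finset.mem_univ, true_and, hget]
        rw [mp, keyσ ⟨k, hkm⟩]
        exact Nat.div_eq_of_lt_le hrangeσ.1 (by rw [Nat.succ_mul]; omega)
    · -- injective
      intro a ha b hb hab
      rw [Finset.mem_coe, Finset.mem_Ico] at ha hb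
      have ham : a < l.length := by omega
      have hbm : b < l.length := by omega
      have hab' : l.get ⟨a, ham⟩ = l.get ⟨b, hbm⟩ := by
        rw [← List.getD_eq_get l (π' ⟨0, hn⟩) ⟨a, ham⟩, ← List.getD_eq_get l (π' ⟨0, hn⟩) ⟨b, hbm⟩]
        exact hab
      have h := (List.Nodup.get_inj_iff hnd).mp hab'
      simpa using congrArg Fin.val h
  -- conclude parts are equal, hence multipermutations are equal
  apply hne
  funext j
  have hj : (π.symm j : ℕ) < n := (π.symm j).isLt
  have hi : mp n r π j < n / r := Nat.div_lt_div_of_lt_of_dvd hdvd hj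
  have heq : part n r π (mp n r π j) = part n r σ (mp n r π j) := by
    rcases hAD π hπ σ hσ _ hi with h | h
    · exact h
    · exact absurd (hpart _ hi) (by omega)
  have hjmem : j ∈ part n r π (mp n r π j) := by simp [part]
  rw [heq] at hjmem
  simp only [part, Finset.mem_filter, Finset.mem_univ, true_and] at hjmem
  exact hjmem.symm
end

section
/- Interleaving construction preserves Ulam distance: let {P_1,...,P_r} be a partition of [n] into sets of size n/r, and for each i let C_i be a set of orderings (permutations) of P_i with pairwise Ulam distance at least d. Then the code C = ∪ R_r(c_1 ∘ ... ∘ c_r), where c_i ∈ C_i and ∘ denotes interleaving one element at a time, has minimum r-regular Ulam distance at least d. -/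
/-- The code obtained by interleaving, one element at a time, component codewords
`c i ∈ C i` (orderings of the parts `P i`), and closing under `≡_r`:
the interleaved permutation `σ` has `σ((j-1)r + i) = (c i)(j)`. -/
def interleaveCode (n r : ℕ) (hr : 0 < r) (hdvd : r ∣ n)
    (C : Fin r → Set (Fin (n / r) → Fin n)) : Set (Equiv.Perm (Fin n)) :=
  {π | ∃ c : (i : Fin r) → (Fin (n / r) → Fin n),
      (∀ i, c i ∈ C i) ∧
      ∃ σ : Equiv.Perm (Fin n), mp n r σ = mp n r π ∧
        ∀ x : Fin n, σ x = c ⟨(x : ℕ) % r, Nat.mod_lt _ hr⟩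
          ⟨(x : ℕ) / r, Nat.div_lt_div_of_lt_of_dvd hdvd x.isLt⟩}

section Aux

variable {α : Type*}

lemma lcs_bddAbove (A B : List α) :
    BddAbove {k | ∃ l : List α, l.length = k ∧ l.Sublist A ∧ l.Sublist B} :=
  ⟨A.length, fun _ ⟨_, hl, hA, _⟩ => hl ▸ hA.length_le⟩

lemma lcs_nonempty (A B : List α) :
    Set.Nonempty {k | ∃ l : List α, l.length = k ∧ l.Sublist A ∧ l.Sublist B} :=
  ⟨0, [], rfl, List.nil_sublist _, List.nil_sublist _⟩

lemma le_lcsLen {A B l : List α} (hA : l.Sublist A) (hB : l.Sublist B) :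
    l.length ≤ lcsLen A B :=
  le_csSup (lcs_bddAbove A B) ⟨l, rfl, hA, hB⟩

lemma lcsLen_exists (A B : List α) :
    ∃ l : List α, l.length = lcsLen A B ∧ l.Sublist A ∧ l.Sublist B :=
  Nat.sSup_mem (lcs_nonempty A B) (lcs_bddAbove A B)

lemma lcsLen_le_length (A B : List α) : lcsLen A B ≤ A.length :=
  csSup_le (lcs_nonempty A B) (fun _ ⟨_, hl, hA, _⟩ => hl ▸ hA.length_le)

lemma length_filter_add_length_filter_not (l : List α) (p : α → Bool) :
    (l.filter p).length + (l.filter (fun a => !p a)).length = l.length := by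
  induction l with
  | nil => simp
  | cons a l ih =>
    by_cases h : p a <;> simp [List.filter_cons, h, ← ih] <;> omega

/-- Projection inequality: the LCS of `A`, `B` is at most the number of elements of
`A` outside the filter plus the LCS of the projections. -/
lemma lcsLen_le_filter (A B : List α) (p : α → Bool) :
    lcsLen A B ≤ (A.filter (fun a => !p a)).length
      + lcsLen (A.filter p) (B.filter p) := by
  obtain ⟨l, hl, hA, hB⟩ := lcsLen_exists A B
  have h1 : (l.filter p).length ≤ lcsLen (A.filter p) (B.filter p) :=
    le_lcsLen (hA.filter p) (hB.filter p)
  have h2 : (l.filter (fun a => !p a)).length ≤ (A.filter (fun a => !p a)).length :=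
    (hA.filter _).length_le
  have h3 := length_filter_add_length_filter_not l p
  omega

lemma filter_eq_singleton [DecidableEq α] (p : α → Bool) (l : List α) (v : α)
    (hiff : ∀ a ∈ l, (p a = true ↔ a = v)) (hnd : l.Nodup) (hv : v ∈ l) :
    l.filter p = [v] := by
  have : l.filter p = l.filter (fun a => a == v) := by
    apply List.filter_congr
    intro a ha
    have hia := hiff a ha
    by_cases h : a = v
    · subst h; simp [hia.mpr rfl]
    · have hpa : p a = false := by
        cases hpc : p a
        · rfl
        · exact absurd (hia.mp hpc) h
      simp [hpa, h]
  rw [this, List.filter_beq, List.count_eq_one_of_mem hnd hv, List.replicate_one]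

/-- Filtering a blocked list where each block filters to one designated element. -/
lemma filter_map_range_blocks (p : α → Bool) (F G : ℕ → α) (r : ℕ) (m : ℕ)
    (hblock : ∀ j < m, (((List.range r).map (fun t => F (j * r + t))).filter p) = [G j]) :
    (((List.range (m * r)).map F).filter p) = (List.range m).map G := by
  induction m with
  | zero => simp
  | succ m ih =>
    have h1 : (m + 1) * r = m * r + r := by ring
    rw [h1, List.range_add, List.map_append, List.filter_append,
      ih (fun j hj => hblock j (by omega)), List.map_map, List.range_succ,
      List.map_append]
    congr 1
    have h2 := hblock m (by omega)
    simpa [Function.comp_def] using h2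

lemma ofFn_eq_map_range {n : ℕ} (f : Fin n → α) (F : ℕ → α)
    (h : ∀ x (hx : x < n), F x = f ⟨x, hx⟩) :
    List.ofFn f = (List.range n).map F := by
  apply List.ext_getElem
  · simp
  · intro i h1 h2
    simp only [List.getElem_ofFn, List.getElem_map, List.getElem_range]
    rw [h i (by simpa using h1)]

end Aux

/-- Interleaving construction: if each component code `C i` consists of orderings of a
part `P i` of a partition of `[n]` into `r` sets of size `n/r`, with pairwise Ulam
distance at least `d` within each component, then the interleaved code has minimum
`r`-regular Ulam distance at least `d`. -/
theorem interleave_code_distance (n r d : ℕ) (hn : 0 < n) (hr : 0 < r) (hdvd : r ∣ n)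
    (P : Fin r → Finset (Fin n))
    (hPcard : ∀ i, (P i).card = n / r)
    (hPdisj : ∀ i i', i ≠ i' → Disjoint (P i) (P i'))
    (C : Fin r → Set (Fin (n / r) → Fin n))
    (hmem : ∀ i, ∀ c ∈ C i, Function.Injective c ∧ ∀ j, c j ∈ P i)
    (hdist : ∀ i, ∀ c ∈ C i, ∀ c' ∈ C i, c ≠ c' →
      d ≤ ulamList (List.ofFn c) (List.ofFn c')) :
    ∀ π ∈ interleaveCode n r hr hdvd C, ∀ σ ∈ interleaveCode n r hr hdvd C,
      mp n r π ≠ mp n r σ → d ≤ ulamR n r π σ := by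
  intro π hπ σ hσ hne
  obtain ⟨c, hc, σ₀, hσ₀mp, hσ₀⟩ := hπ
  obtain ⟨c', hc', τ₀, hτ₀mp, hτ₀⟩ := hσ
  have hmr : n / r * r = n := Nat.div_mul_cancel hdvd
  have hm : 0 < n / r := Nat.div_pos (Nat.le_of_dvd hn hdvd) hr
  -- key: the mp of an interleaved permutation sends `c i j` to `j`
  have key : ∀ (c : (i : Fin r) → (Fin (n / r) → Fin n)) (ρ : Equiv.Perm (Fin n)),
      (∀ x : Fin n, ρ x = c ⟨(x : ℕ) % r, Nat.mod_lt _ hr⟩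
        ⟨(x : ℕ) / r, Nat.div_lt_div_of_lt_of_dvd hdvd x.isLt⟩) →
      ∀ (i : Fin r) (j : Fin (n / r)), mp n r ρ (c i j) = (j : ℕ) := by
    intro c ρ hρ i j
    have hir : (i : ℕ) < r := i.isLt
    have hjm : (j : ℕ) < n / r := j.isLt
    have hlt : (j : ℕ) * r + (i : ℕ) < n := by
      have h3 : ((j : ℕ) + 1) * r ≤ (n / r) * r := Nat.mul_le_mul_right r hjm
      have h4 : (j : ℕ) * r + (i : ℕ) < ((j : ℕ) + 1) * r := by
        rw [add_mul, one_mul]; omega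
      omega
    have hmod : ((j : ℕ) * r + (i : ℕ)) % r = (i : ℕ) := by
      rw [Nat.mul_add_mod']
      exact Nat.mod_eq_of_lt hir
    have hdiv : ((j : ℕ) * r + (i : ℕ)) / r = (j : ℕ) := by
      rw [Nat.mul_comm, Nat.mul_add_div hr, Nat.div_eq_of_lt hir, Nat.add_zero]
    have hρx : ρ ⟨(j : ℕ) * r + (i : ℕ), hlt⟩ = c i j := by
      rw [hρ]
      congr 1
      · exact Fin.ext hmod
      · exact Fin.ext hdiv
    have hsymm : ρ.symm (c i j) = ⟨(j : ℕ) * r + (i : ℕ), hlt⟩ := by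
      rw [← hρx, Equiv.symm_apply_apply]
    unfold mp
    rw [hsymm]
    exact hdiv
  -- surjectivity of codewords onto parts
  have hsurj : ∀ (i : Fin r), ∀ cc ∈ C i, ∀ e ∈ P i, ∃ j, cc j = e := by
    intro i cc hcc e he
    obtain ⟨hinj, hmemP⟩ := hmem i cc hcc
    have himg : Finset.image cc Finset.univ = P i := by
      apply Finset.eq_of_subset_of_card_le
      · intro a ha
        obtain ⟨j, _, rfl⟩ := Finset.mem_image.mp ha
        exact hmemP j
      · rw [hPcard i, Finset.card_image_of_injective _ hinj, Finset.card_univ,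
          Fintype.card_fin]
    rw [← himg] at he
    obtain ⟨j, _, hj⟩ := Finset.mem_image.mp he
    exact ⟨j, hj⟩
  -- find the coordinate i where the codewords differ
  have hex : ∃ e : Fin n, mp n r π e ≠ mp n r σ e := by
    by_contra h
    push_neg at h
    exact hne (funext h)
  obtain ⟨e, he⟩ := hex
  set x := σ₀.symm e with hx
  set i : Fin r := ⟨(x : ℕ) % r, Nat.mod_lt _ hr⟩ with hi
  set j : Fin (n / r) := ⟨(x : ℕ) / r, Nat.div_lt_div_of_lt_of_dvd hdvd x.isLt⟩ with hj
  have hecij : c i j = e := by rw [← hσ₀ x, hx, Equiv.apply_symm_apply]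
  set y := τ₀.symm e with hy
  set i' : Fin r := ⟨(y : ℕ) % r, Nat.mod_lt _ hr⟩ with hi'
  set j' : Fin (n / r) := ⟨(y : ℕ) / r, Nat.div_lt_div_of_lt_of_dvd hdvd y.isLt⟩ with hj'
  have hecij' : c' i' j' = e := by rw [← hτ₀ y, hy, Equiv.apply_symm_apply]
  have hii' : i = i' := by
    by_contra hii
    have h1 : e ∈ P i := hecij ▸ (hmem i (c i) (hc i)).2 j
    have h2 : e ∈ P i' := hecij' ▸ (hmem i' (c' i') (hc' i')).2 j'
    exact (Finset.disjoint_left.mp (hPdisj i i' hii) h1) h2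
  have hmpπc : ∀ (jj : Fin (n / r)), mp n r π (c i jj) = (jj : ℕ) := by
    intro jj; rw [← hσ₀mp]; exact key c σ₀ hσ₀ i jj
  have hmpσc : ∀ (jj : Fin (n / r)), mp n r σ (c' i jj) = (jj : ℕ) := by
    intro jj; rw [← hτ₀mp]; exact key c' τ₀ hτ₀ i jj
  have hjj' : (j : ℕ) ≠ (j' : ℕ) := by
    intro h
    apply he
    have h1 : mp n r π e = (j : ℕ) := by rw [← hecij]; exact hmpπc j
    have h2 : mp n r σ e = (j' : ℕ) := by rw [← hecij', ← hii']; exact hmpσc j'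
    rw [h1, h2, h]
  have hcne : c i ≠ c' i := by
    intro h
    have h1 : c' i j = e := by rw [← h]; exact hecij
    have h2 : c' i j' = e := by rw [← hii'] at hecij'; exact hecij'
    have h3 := (hmem i (c' i) (hii' ▸ hc' i')).1 (h1.trans h2.symm)
    exact hjj' (by rw [h3])
  have hd : d ≤ ulamList (List.ofFn (c i)) (List.ofFn (c' i)) :=
    hdist i (c i) (hc i) (c' i) (hii' ▸ hc' i') hcne
  -- now bound the r-regular Ulam distance
  unfold ulamR
  have hSne : Set.Nonempty {k | ∃ π' σ' : Equiv.Perm (Fin n),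
      mp n r π' = mp n r π ∧ mp n r σ' = mp n r σ ∧ k = ulam n π' σ'} :=
    ⟨ulam n π σ, π, σ, rfl, rfl, rfl⟩
  apply le_csInf hSne
  rintro k ⟨π', σ', hπ', hσ', rfl⟩
  -- projection claim
  set p : Fin n → Bool := fun a => decide (a ∈ P i) with hp
  have proj : ∀ (ρ' : Equiv.Perm (Fin n)) (cc : Fin (n / r) → Fin n), cc ∈ C i →
      (∀ jj : Fin (n / r), mp n r ρ' (cc jj) = (jj : ℕ)) →
      (List.ofFn ρ').filter p = List.ofFn cc := by
    intro ρ' cc hcc hmprho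
    set F : ℕ → Fin n := fun t => ρ' ⟨t % n, Nat.mod_lt _ hn⟩ with hF
    set G : ℕ → Fin n := fun t => cc ⟨t % (n / r), Nat.mod_lt _ hm⟩ with hG
    have hA : List.ofFn ρ' = (List.range n).map F := by
      apply ofFn_eq_map_range
      intro t ht
      simp only [hF]
      congr 1
      exact Fin.ext (Nat.mod_eq_of_lt ht)
    have hCc : List.ofFn cc = (List.range (n / r)).map G := by
      apply ofFn_eq_map_range
      intro t ht
      simp only [hG]
      congr 1
      exact Fin.ext (Nat.mod_eq_of_lt ht)
    rw [hA, hCc, show List.range n = List.range ((n / r) * r) from by rw [hmr]]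
    apply filter_map_range_blocks
    intro jj hjj
    set v : Fin n := cc ⟨jj, hjj⟩ with hv
    have hGv : G jj = v := by
      simp only [hG, hv]
      congr 1
      exact Fin.ext (Nat.mod_eq_of_lt hjj)
    rw [hGv]
    have hblk : ∀ t, t < r → jj * r + t < n := by
      intro t ht
      have h3 : (jj + 1) * r ≤ (n / r) * r := Nat.mul_le_mul_right r (by omega)
      have h4 : jj * r + t < (jj + 1) * r := by rw [add_mul, one_mul]; omega
      omega
    apply filter_eq_singleton
    · -- iff condition
      intro a ha
      obtain ⟨t, ht, rfl⟩ := List.mem_map.mp ha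
      rw [List.mem_range] at ht
      have hlt : jj * r + t < n := hblk t ht
      have hFt : F (jj * r + t) = ρ' ⟨jj * r + t, hlt⟩ := by
        simp only [hF]
        congr 1
        exact Fin.ext (Nat.mod_eq_of_lt hlt)
      rw [hFt]
      simp only [hp, decide_eq_true_eq]
      constructor
      · intro hmemPi
        obtain ⟨j₂, hj₂⟩ := hsurj i cc hcc _ hmemPi
        have h1 : mp n r ρ' (ρ' ⟨jj * r + t, hlt⟩) = jj := by
          unfold mp
          rw [Equiv.symm_apply_apply]
          simp only
          rw [Nat.mul_comm, Nat.mul_add_div hr, Nat.div_eq_of_lt ht, Nat.add_zero]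
        have h2 : mp n r ρ' (cc j₂) = (j₂ : ℕ) := hmprho j₂
        rw [← hj₂] at h1
        have h5 : (j₂ : ℕ) = jj := by rw [← h1, h2]
        rw [← hj₂, hv]
        congr 1
        exact Fin.ext h5
      · intro hveq
        rw [hveq, hv]
        exact (hmem i cc hcc).2 _
    · -- nodup
      apply List.Nodup.map_on _ List.nodup_range
      intro t1 ht1 t2 ht2 heq
      rw [List.mem_range] at ht1 ht2
      simp only [hF] at heq
      have h6 := congrArg Fin.val (ρ'.injective heq)
      simp only at h6
      rw [Nat.mod_eq_of_lt (hblk t1 ht1), Nat.mod_eq_of_lt (hblk t2 ht2)] at h6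
      omega
    · -- membership of v
      have hmpv : mp n r ρ' v = jj := by
        have h7 := hmprho ⟨jj, hjj⟩
        simpa [hv] using h7
      have hx₀div : (ρ'.symm v : ℕ) / r = jj := hmpv
      have hx₀lt : (ρ'.symm v : ℕ) < n := (ρ'.symm v).isLt
      have hx₀mod : (ρ'.symm v : ℕ) % r < r := Nat.mod_lt _ hr
      have hx₀eq : jj * r + (ρ'.symm v : ℕ) % r = (ρ'.symm v : ℕ) := by
        have h8 := Nat.div_add_mod ((ρ'.symm v : ℕ)) r
        rw [hx₀div, Nat.mul_comm] at h8
        exact h8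
      apply List.mem_map.mpr
      refine ⟨(ρ'.symm v : ℕ) % r, List.mem_range.mpr hx₀mod, ?_⟩
      simp only [hF]
      rw [hx₀eq]
      have h9 : (⟨(ρ'.symm v : ℕ) % n, Nat.mod_lt _ hn⟩ : Fin n) = ρ'.symm v :=
        Fin.ext (Nat.mod_eq_of_lt hx₀lt)
      rw [h9, Equiv.apply_symm_apply]
  have hmpπ' : ∀ jj : Fin (n / r), mp n r π' (c i jj) = (jj : ℕ) := by
    intro jj; rw [hπ']; exact hmpπc jj
  have hmpσ' : ∀ jj : Fin (n / r), mp n r σ' (c' i jj) = (jj : ℕ) := by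
    intro jj; rw [hσ']; exact hmpσc jj
  have hAfilter : (List.ofFn π').filter p = List.ofFn (c i) := proj π' (c i) (hc i) hmpπ'
  have hBfilter : (List.ofFn σ').filter p = List.ofFn (c' i) :=
    proj σ' (c' i) (hii' ▸ hc' i') hmpσ'
  -- assemble the inequalities
  have hlenA : (List.ofFn π').length = n := by simp
  have hfiltlen : ((List.ofFn π').filter p).length = n / r := by rw [hAfilter]; simp
  have hnotlen : ((List.ofFn π').filter (fun a => !p a)).length = n - n / r := by
    have h10 := length_filter_add_length_filter_not (List.ofFn π') p
    omega
  have hmain := lcsLen_le_filter (List.ofFn π') (List.ofFn σ') p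
  rw [hnotlen, hAfilter, hBfilter] at hmain
  have hlcsF_le : lcsLen (List.ofFn (c i)) (List.ofFn (c' i)) ≤ n / r := by
    have h11 := lcsLen_le_length (List.ofFn (c i)) (List.ofFn (c' i))
    simpa using h11
  have hd' : d ≤ n / r - lcsLen (List.ofFn (c i)) (List.ofFn (c' i)) := by
    have h12 : (List.ofFn (c i)).length = n / r := by simp
    unfold ulamList at hd
    omega
  have hmn : n / r ≤ n := Nat.div_le_self n r
  unfold ulam
  omega
end
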